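/- Let Q₀ ∈ ℝ^{n×n} be symmetric, let R ∈ ℝ^{m×m} be symmetric positive semidefinite, and let L ∈ ℝ^{m×n}. Then the set D = {(Y, X) ∈ ℝ^{m×n} × ℝ^{n×n} : X symmetric positive definite} is convex, and the function f(Y, X) = trace(Q₀X) + trace(R·Y X⁻¹ Yᵀ) + 2·trace(LᵀY) is convex on D, i.e., for all (Y₁,X₁), (Y₂,X₂) ∈ D and all θ ∈ [0,1], f(θY₁ + (1−θ)Y₂, θX₁ + (1−θ)X₂) ≤ θ·f(Y₁,X₁) + (1−θ)·f(Y₂,X₂). -/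

import Mathlib

open Matrix

noncomputable section

lemma psd_smul {k : Type*} [Fintype k] {A : Matrix k k ℝ} (hA : A.PosSemidef) {c : ℝ}
    (hc : 0 ≤ c) : (c • A).PosSemidef := by
  refine ⟨?_, fun x => ?_⟩
  · unfold Matrix.IsHermitian
    rw [Matrix.conjTranspose_smul, hA.1.eq]
    simp
  · exact (hA.smul hc).2 x

lemma pd_smul {k : Type*} [Fintype k] {A : Matrix k k ℝ} (hA : A.PosDef) {c : ℝ}
    (hc : 0 < c) : (c • A).PosDef := by
  refine ⟨?_, fun x hx => ?_⟩
  · unfold Matrix.IsHermitian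
    rw [Matrix.conjTranspose_smul, hA.1.eq]
    simp
  · exact (hA.smul hc).2 hx

lemma pd_combo {k : Type*} [Fintype k] {A B : Matrix k k ℝ} (hA : A.PosDef) (hB : B.PosDef)
    {θ : ℝ} (h0 : 0 ≤ θ) (h1 : θ ≤ 1) : (θ • A + (1 - θ) • B).PosDef := by
  rcases eq_or_lt_of_le h0 with h | h
  · simpa [← h] using hB
  · exact (pd_smul hA h).add_posSemidef (psd_smul hB.posSemidef (by linarith))

lemma psd_trace_nonneg {k : Type*} [Fintype k] [DecidableEq k] {A : Matrix k k ℝ} (hA : A.PosSemidef) :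
    0 ≤ A.trace := by
  rw [Matrix.trace]
  refine Finset.sum_nonneg fun i _ => ?_
  simpa using hA.dotProduct_mulVec_nonneg (Pi.single i 1)

lemma trace_mul_psd_nonneg {k : Type*} [Fintype k] [DecidableEq k] {R S : Matrix k k ℝ}
    (hR : R.PosSemidef) (hS : S.PosSemidef) : 0 ≤ (R * S).trace := by
  obtain ⟨B, hB⟩ : ∃ B : Matrix k k ℝ, R = star B * B := by
    open scoped MatrixOrder Matrix.Norms.L2Operator in
    exact CStarAlgebra.nonneg_iff_eq_star_mul_self.mp hR.nonneg
  rw [hB, Matrix.mul_assoc, Matrix.trace_mul_comm]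
  exact psd_trace_nonneg (hS.mul_mul_conjTranspose_same B)

/-- Joint matrix convexity of `(Y, X) ↦ Y X⁻¹ Yᵀ` via Schur complements. -/
lemma frac_convex {n m : ℕ} {Y₁ Y₂ : Matrix (Fin m) (Fin n) ℝ}
    {X₁ X₂ : Matrix (Fin n) (Fin n) ℝ} (hX₁ : X₁.PosDef) (hX₂ : X₂.PosDef)
    {θ : ℝ} (h0 : 0 ≤ θ) (h1 : θ ≤ 1) :
    (θ • (Y₁ * X₁⁻¹ * Y₁ᵀ) + (1 - θ) • (Y₂ * X₂⁻¹ * Y₂ᵀ) -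
      (θ • Y₁ + (1 - θ) • Y₂) * (θ • X₁ + (1 - θ) • X₂)⁻¹ *
        (θ • Y₁ + (1 - θ) • Y₂)ᵀ).PosSemidef := by
  haveI := hX₁.isUnit.invertible
  haveI := hX₂.isUnit.invertible
  have hX : (θ • X₁ + (1 - θ) • X₂).PosDef := pd_combo hX₁ hX₂ h0 h1
  haveI := hX.isUnit.invertible
  have h₁ : (fromBlocks (Y₁ * X₁⁻¹ * Y₁ᵀ) Y₁ Y₁ᴴ X₁).PosSemidef := by
    rw [Matrix.PosDef.fromBlocks₂₂ _ _ hX₁]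
    rw [Matrix.conjTranspose_eq_transpose_of_trivial, sub_self]
    exact Matrix.PosSemidef.zero
  have h₂ : (fromBlocks (Y₂ * X₂⁻¹ * Y₂ᵀ) Y₂ Y₂ᴴ X₂).PosSemidef := by
    rw [Matrix.PosDef.fromBlocks₂₂ _ _ hX₂]
    rw [Matrix.conjTranspose_eq_transpose_of_trivial, sub_self]
    exact Matrix.PosSemidef.zero
  have hsum : (fromBlocks
      (θ • (Y₁ * X₁⁻¹ * Y₁ᵀ) + (1 - θ) • (Y₂ * X₂⁻¹ * Y₂ᵀ))
      (θ • Y₁ + (1 - θ) • Y₂) (θ • Y₁ + (1 - θ) • Y₂)ᴴ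
      (θ • X₁ + (1 - θ) • X₂)).PosSemidef := by
    have := (psd_smul h₁ h0).add (psd_smul h₂ (by linarith : (0:ℝ) ≤ 1 - θ))
    simpa [Matrix.fromBlocks_smul, Matrix.fromBlocks_add, Matrix.conjTranspose_add,
      Matrix.conjTranspose_smul] using this
  have := (Matrix.PosDef.fromBlocks₂₂ _ _ hX).mp hsum
  rwa [Matrix.conjTranspose_eq_transpose_of_trivial] at this

/-- Cost of the convex reformulation:
`f(Y, X) = trace(Q₀X) + trace(R·Y X⁻¹ Yᵀ) + 2·trace(LᵀY)`. -/
def cost {n m : ℕ} (Q0 : Matrix (Fin n) (Fin n) ℝ) (R : Matrix (Fin m) (Fin m) ℝ)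
    (L : Matrix (Fin m) (Fin n) ℝ) (Y : Matrix (Fin m) (Fin n) ℝ)
    (X : Matrix (Fin n) (Fin n) ℝ) : ℝ :=
  Matrix.trace (Q0 * X) + Matrix.trace (R * (Y * X⁻¹ * Yᵀ)) +
    2 * Matrix.trace (Lᵀ * Y)

/-- The domain `D = {(Y, X) : X ≻ 0}` is convex, and the cost of the convex
reformulation of LQR is convex on `D`. -/
theorem stmt_17 {n m : ℕ}
    (Q0 : Matrix (Fin n) (Fin n) ℝ) (R : Matrix (Fin m) (Fin m) ℝ)
    (L : Matrix (Fin m) (Fin n) ℝ)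
    (hQ0 : Q0.IsHermitian) (hR : R.PosSemidef) :
    Convex ℝ {p : Matrix (Fin m) (Fin n) ℝ × Matrix (Fin n) (Fin n) ℝ | p.2.PosDef} ∧
      ∀ Y₁ X₁ Y₂ X₂, X₁.PosDef → X₂.PosDef → ∀ θ : ℝ, 0 ≤ θ → θ ≤ 1 →
        cost Q0 R L (θ • Y₁ + (1 - θ) • Y₂) (θ • X₁ + (1 - θ) • X₂) ≤
          θ * cost Q0 R L Y₁ X₁ + (1 - θ) * cost Q0 R L Y₂ X₂ := by
  constructor
  · intro p hp q hq a b ha hb hab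
    simp only [Set.mem_setOf_eq] at hp hq ⊢
    have hb' : b = 1 - a := by linarith
    subst hb'
    exact pd_combo hp hq ha (by linarith)
  · intro Y₁ X₁ Y₂ X₂ hX₁ hX₂ θ h0 h1
    have hfrac := frac_convex (Y₁ := Y₁) (Y₂ := Y₂) hX₁ hX₂ h0 h1
    have hkey := trace_mul_psd_nonneg hR hfrac
    rw [Matrix.mul_sub, Matrix.mul_add, Matrix.mul_smul, Matrix.mul_smul,
      Matrix.trace_sub, Matrix.trace_add, Matrix.trace_smul, Matrix.trace_smul] at hkey
    simp only [cost, smul_eq_mul] at *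
    have hlin1 : Matrix.trace (Q0 * (θ • X₁ + (1 - θ) • X₂)) =
        θ * Matrix.trace (Q0 * X₁) + (1 - θ) * Matrix.trace (Q0 * X₂) := by
      rw [Matrix.mul_add, Matrix.mul_smul, Matrix.mul_smul, Matrix.trace_add,
        Matrix.trace_smul, Matrix.trace_smul]
      simp
    have hlin2 : Matrix.trace (Lᵀ * (θ • Y₁ + (1 - θ) • Y₂)) =
        θ * Matrix.trace (Lᵀ * Y₁) + (1 - θ) * Matrix.trace (Lᵀ * Y₂) := by
      rw [Matrix.mul_add, Matrix.mul_smul, Matrix.mul_smul, Matrix.trace_add,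
        Matrix.trace_smul, Matrix.trace_smul]
      simp
    rw [hlin1, hlin2]
    linarith
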